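/- For all integers m ≥ 1 and n ≥ 0, the following identity holds in ℤ[q]: Σ_{k=0}^{n} (−q^{m−1})^{n−k} · (Π_{j=1}^{k} [jm]_q) · h_{n−k}([1]_q, [m+1]_q, …, [km+1]_q) = ([m−1]_q)^n. (The k-th summand is (−q^{m−1})^{n−k} times the Chan–Rhoades ordered q-Stirling number S^o_CR[m,n,k] = [km]!_m · h_{n−k}([1]_q,…,[km+1]_q).) -/
import Mathlib


open Finset

/-- Complete homogeneous symmetric polynomial evaluated at a list of ring elements. -/
def hpoly {R : Type*} [CommSemiring R] : ℕ → List R → R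
  | 0, _ => 1
  | _ + 1, [] => 0
  | j + 1, a :: l => hpoly (j + 1) l + a * hpoly j (a :: l)
  termination_by j l => (j, l.length)

/-- The q-integer `[l]_q = 1 + q + … + q^{l-1}` in `ℤ[q]`. -/
noncomputable def qint (l : ℕ) : Polynomial ℤ := ∑ i ∈ range l, Polynomial.X ^ i

lemma hpoly_zero {R : Type*} [CommSemiring R] (l : List R) : hpoly 0 l = 1 := by
  simp [hpoly]

lemma hpoly_nil {R : Type*} [CommSemiring R] (j : ℕ) : hpoly (j + 1) ([] : List R) = 0 := by
  simp [hpoly]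

lemma hpoly_cons {R : Type*} [CommSemiring R] (j : ℕ) (x : R) (l : List R) :
    hpoly (j + 1) (x :: l) = hpoly (j + 1) l + x * hpoly j (x :: l) := by
  rw [hpoly]

lemma hpoly_append {R : Type*} [CommSemiring R] (j : ℕ) (l : List R) (x : R) :
    hpoly (j + 1) (l ++ [x]) = hpoly (j + 1) l + x * hpoly j (l ++ [x]) := by
  induction j using Nat.strong_induction_on generalizing l with
  | _ j ih =>
    induction l with
    | nil => simp [hpoly_nil, hpoly_cons]
    | cons y l ihl =>
      rw [List.cons_append, hpoly_cons, ihl, hpoly_cons]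
      cases j with
      | zero => simp [hpoly_zero]; ring
      | succ j' =>
        have E1 := hpoly_cons j' y (l ++ [x])
        have E2 := ih j' (Nat.lt_succ_self j') (y :: l)
        rw [List.cons_append] at E2
        conv_lhs => rw [E2]
        conv_rhs => rw [E1]
        ring

lemma key {R : Type*} [CommRing R] (t c : R) (a b : ℕ → R)
    (hb : ∀ k, t * a k + b k = c) (n : ℕ) :
    ∑ k ∈ range (n + 1), t ^ (n - k) * ((∏ j ∈ range k, b j) *
        hpoly (n - k) ((List.range (k + 1)).map a)) = c ^ n := by
  induction n with
  | zero => simp [hpoly_zero]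
  | succ n ih =>
    have hL : ∀ k : ℕ, (List.range (k + 1)).map a = (List.range k).map a ++ [a k] := by
      intro k; rw [List.range_succ, List.map_append]; rfl
    have split : ∀ k ∈ range (n + 1),
        t ^ (n + 1 - k) * ((∏ j ∈ range k, b j) *
            hpoly (n + 1 - k) ((List.range (k + 1)).map a))
        = t ^ (n + 1 - k) * ((∏ j ∈ range k, b j) *
              hpoly (n + 1 - k) ((List.range k).map a))
          + t * (t ^ (n - k) * ((∏ j ∈ range k, b j) *
              (a k * hpoly (n - k) ((List.range (k + 1)).map a)))) := by
      intro k hk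
      have hk' : k ≤ n := Nat.lt_succ_iff.mp (mem_range.mp hk)
      have h1 : n + 1 - k = (n - k) + 1 := by omega
      rw [hL k, h1, hpoly_append, ← hL k]
      ring
    rw [sum_range_succ, sum_congr rfl split, sum_add_distrib]
    have hnil : hpoly (n + 1 - (n + 1)) ((List.range (n + 1 + 1)).map a) = 1 := by
      simp [hpoly_zero]
    have hu : (∑ k ∈ range (n + 1), t ^ (n + 1 - k) * ((∏ j ∈ range k, b j) *
          hpoly (n + 1 - k) ((List.range k).map a)))
        + t ^ (n + 1 - (n + 1)) * ((∏ j ∈ range (n + 1), b j) *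
            hpoly (n + 1 - (n + 1)) ((List.range (n + 1 + 1)).map a))
        = ∑ k ∈ range (n + 1 + 1), t ^ (n + 1 - k) * ((∏ j ∈ range k, b j) *
            hpoly (n + 1 - k) ((List.range k).map a)) := by
      conv_rhs => rw [sum_range_succ]
      rw [hnil]
      simp [Nat.sub_self, hpoly_zero]
    rw [add_right_comm, hu]
    rw [sum_range_succ']
    have h0 : t ^ (n + 1 - 0) * ((∏ j ∈ range 0, b j) *
        hpoly (n + 1 - 0) ((List.range 0).map a)) = 0 := by
      simp [hpoly_nil]
    rw [h0, add_zero]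
    have hshift : ∀ k ∈ range (n + 1),
        t ^ (n + 1 - (k + 1)) * ((∏ j ∈ range (k + 1), b j) *
            hpoly (n + 1 - (k + 1)) ((List.range (k + 1)).map a))
        = b k * (t ^ (n - k) * ((∏ j ∈ range k, b j) *
            hpoly (n - k) ((List.range (k + 1)).map a))) := by
      intro k hk
      have h1 : n + 1 - (k + 1) = n - k := by omega
      rw [h1, prod_range_succ]
      ring
    rw [sum_congr rfl hshift, ← sum_add_distrib]
    have hc : ∀ k ∈ range (n + 1),
        b k * (t ^ (n - k) * ((∏ j ∈ range k, b j) *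
            hpoly (n - k) ((List.range (k + 1)).map a)))
        + t * (t ^ (n - k) * ((∏ j ∈ range k, b j) *
            (a k * hpoly (n - k) ((List.range (k + 1)).map a))))
        = c * (t ^ (n - k) * ((∏ j ∈ range k, b j) *
            hpoly (n - k) ((List.range (k + 1)).map a))) := by
      intro k hk
      rw [← hb k]
      ring
    rw [sum_congr rfl hc, ← mul_sum, ih, pow_succ]
    ring

lemma qint_step (m : ℕ) (hm : 1 ≤ m) (k : ℕ) :
    -(Polynomial.X : Polynomial ℤ) ^ (m - 1) * qint (k * m + 1) + qint ((k + 1) * m)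
      = qint (m - 1) := by
  have h1 : qint ((k + 1) * m)
      = qint (m - 1) + Polynomial.X ^ (m - 1) * qint (k * m + 1) := by
    unfold qint
    rw [Finset.mul_sum]
    have he : ∀ i ∈ range (k * m + 1),
        (Polynomial.X : Polynomial ℤ) ^ (m - 1) * Polynomial.X ^ i
          = Polynomial.X ^ ((m - 1) + i) := by
      intro i _; rw [pow_add]
    rw [sum_congr rfl he]
    have h2 : k * m + 1 = (k + 1) * m - (m - 1) := by
      cases m with
      | zero => omega
      | succ m' => ring_nf; omega
    rw [h2, ← Finset.sum_Ico_eq_sum_range]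
    simp only [Finset.range_eq_Ico]
    rw [Finset.sum_Ico_consecutive _ (Nat.zero_le _)
      (le_trans (Nat.sub_le m 1) (Nat.le_mul_of_pos_left m (Nat.succ_pos k)))]
  rw [h1]; ring

/-- in `ℤ[q]`,
`Σ_{k=0}^{n} (−q^{m−1})^{n−k} · (Π_{j=1}^{k} [jm]_q) · h_{n−k}([1]_q, [m+1]_q, …, [km+1]_q)
  = ([m−1]_q)^n`,
i.e. the alternating sum of the Chan–Rhoades ordered q-Stirling numbers `S^o_CR[m,n,k]`
is `[m−1]^n`. -/
theorem stmt9 (m n : ℕ) (hm : 1 ≤ m) :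
    ∑ k ∈ range (n + 1),
        (-(Polynomial.X : Polynomial ℤ) ^ (m - 1)) ^ (n - k) *
          ((∏ j ∈ range k, qint ((j + 1) * m)) *
            hpoly (n - k) ((List.range (k + 1)).map fun j => qint (j * m + 1)))
      = qint (m - 1) ^ n := by
  exact key (-(Polynomial.X : Polynomial ℤ) ^ (m - 1)) (qint (m - 1))
    (fun j => qint (j * m + 1)) (fun j => qint ((j + 1) * m))
    (fun k => qint_step m hm k) n
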